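/- Let d ≥ 3, R_0 > 0 and let φ : [R_0, ∞) → (0, ∞) be a decreasing function. Suppose (c_n) is a sequence of points in ℝ^d with ‖c_n - c_m‖ ≥ 2ε (n ≠ m, ε > 0) such that every ball B(x, R) in ℝ^d \ B(0, R_0) contains at least one c_n (R > 0 fixed). Then ∑_n φ(‖c_n‖)^{d-2} / ‖c_n‖^{d-2} < ∞ if and only if ∫_{R_0}^∞ r φ(r)^{d-2} dr < ∞. -/

import Mathlib

open MeasureTheory

open Set Function Metric MeasureTheory
open scoped ENNReal NNReal

local notation "dim" => Module.finrank ℝ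

lemma lintegral_fun_norm_addHaar' {E : Type*} [NormedAddCommGroup E] [NormedSpace ℝ E]
    [MeasurableSpace E] [BorelSpace E] [Nontrivial E] [FiniteDimensional ℝ E]
    (μ : Measure E) [μ.IsAddHaarMeasure] (f : ℝ → ℝ≥0∞) (hf : Measurable f) :
    ∫⁻ x, f ‖x‖ ∂μ = dim E * μ (ball 0 1) *
      ∫⁻ y in Ioi (0 : ℝ), ENNReal.ofReal (y ^ (dim E - 1)) * f y := by
  have key : ∫⁻ y : Ioi (0:ℝ), f y ∂(Measure.volumeIoiPow (dim E - 1))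
      = ∫⁻ y in Ioi (0:ℝ), ENNReal.ofReal (y ^ (dim E - 1)) * f y := by
    rw [Measure.volumeIoiPow,
      lintegral_withDensity_eq_lintegral_mul _
        (f := fun r : Ioi (0:ℝ) => ENNReal.ofReal (r.1 ^ (dim E - 1)))
        ((measurable_subtype_coe.pow_const _).ennreal_ofReal)
        (g := fun y : Ioi (0:ℝ) => f ↑y) (hf.comp measurable_subtype_coe)]
    exact lintegral_subtype_comap measurableSet_Ioi
      (fun a : ℝ => ENNReal.ofReal (a ^ (dim E - 1)) * f a)
  calc
    ∫⁻ x, f ‖x‖ ∂μ = ∫⁻ x : ({(0)}ᶜ : Set E), f ‖(x : E)‖ ∂(μ.comap (↑)) := by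
      rw [lintegral_subtype_comap (measurableSet_singleton _).compl fun x ↦ f (‖x‖),
        MeasureTheory.restrict_compl_singleton]
    _ = ∫⁻ p : sphere (0 : E) 1 × Ioi (0 : ℝ), f p.2
        ∂(μ.toSphere.prod (.volumeIoiPow (dim E - 1))) := by
      convert μ.measurePreserving_homeomorphUnitSphereProd.lintegral_comp
        (f := fun p : sphere (0 : E) 1 × Ioi (0 : ℝ) => f p.2)
        (hf.comp (measurable_subtype_coe.comp measurable_snd)) using 2
      funext x
      simp
    _ = μ.toSphere univ * ∫⁻ y : Ioi (0 : ℝ), f y ∂(.volumeIoiPow (dim E - 1)) := by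
      rw [MeasureTheory.lintegral_prod (fun p : sphere (0 : E) 1 × Ioi (0 : ℝ) => f ↑p.2)
        ((hf.comp (measurable_subtype_coe.comp measurable_snd)).aemeasurable)]
      simp [MeasureTheory.lintegral_const, mul_comm]
    _ = _ := by rw [Measure.toSphere_apply_univ, key]

lemma lintegral_shift' (f : ℝ → ℝ≥0∞) (a : ℝ) (s : Set ℝ) :
    ∫⁻ x in (fun r : ℝ => r + a) ⁻¹' s, f (x + a) = ∫⁻ x in s, f x :=
  (measurePreserving_add_right (volume : Measure ℝ) a).setLIntegral_comp_preimage_emb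
    (MeasurableEquiv.addRight a).measurableEmbedding f s

lemma lintegral_shift_Ioi (f : ℝ → ℝ≥0∞) (a b : ℝ) :
    ∫⁻ x in Ioi (b + a), f x = ∫⁻ x in Ioi b, f (x + a) := by
  rw [← lintegral_shift' f a (Ioi (b + a))]
  congr 1
  ext x
  simp

lemma lintegral_shift_Ici (f : ℝ → ℝ≥0∞) (a b : ℝ) :
    ∫⁻ x in Ici (b + a), f x = ∫⁻ x in Ici b, f (x + a) := by
  rw [← lintegral_shift' f a (Ici (b + a))]
  congr 1
  ext x
  simp


/-- For a `2ε`-separated, `R`-dense ("regularly located") sequence of centres outside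
`B(0,R₀)` and a decreasing positive function `φ`, the sum `∑ φ(‖c n‖)^{d-2}/‖c n‖^{d-2}`
is finite if and only if `∫_{R₀}^∞ r φ(r)^{d-2} dr` is finite. -/
theorem sum_integral_comparison (d : ℕ) (hd : 3 ≤ d) (R₀ ε R : ℝ)
    (hR₀ : 0 < R₀) (hε : 0 < ε) (hR : 0 < R)
    (φ : ℝ → ℝ) (hφmono : AntitoneOn φ (Set.Ici R₀))
    (hφpos : ∀ t, R₀ ≤ t → 0 < φ t)
    (c : ℕ → EuclideanSpace ℝ (Fin d))
    (hout : ∀ n, R₀ ≤ ‖c n‖)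
    (hsep : ∀ n m, n ≠ m → 2 * ε ≤ ‖c n - c m‖)
    (hdense : ∀ x : EuclideanSpace ℝ (Fin d), R₀ ≤ ‖x‖ → ∃ n, ‖x - c n‖ < R) :
    Summable (fun n => φ ‖c n‖ ^ (d - 2) / ‖c n‖ ^ (d - 2)) ↔
      IntegrableOn (fun t => t * φ t ^ (d - 2)) (Set.Ici R₀) := by
  classical
  set m := d - 2 with hm
  have hd1 : d - 1 = m + 1 := by omega
  -- the normalized antitone function
  set g : ℝ → ℝ := fun t => φ (max t R₀) ^ m / (max t R₀) ^ m with hg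
  have hmaxpos : ∀ t : ℝ, 0 < max t R₀ := fun t => lt_of_lt_of_le hR₀ (le_max_right _ _)
  have hgpos : ∀ t, 0 < g t := fun t =>
    div_pos (pow_pos (hφpos _ (le_max_right _ _)) _) (pow_pos (hmaxpos t) _)
  have hganti : Antitone g := by
    intro s t hst
    have h1 : R₀ ≤ max s R₀ := le_max_right _ _
    have h2 : max s R₀ ≤ max t R₀ := max_le_max hst le_rfl
    have hφt : 0 ≤ φ (max t R₀) := (hφpos _ (h1.trans h2)).le
    exact div_le_div₀ (pow_nonneg (hφpos _ h1).le _)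
      (pow_le_pow_left₀ hφt (hφmono h1 (h1.trans h2) h2) _)
      (pow_pos (hmaxpos s) _)
      (pow_le_pow_left₀ (hmaxpos s).le h2 _)
  have hgval : ∀ t, R₀ ≤ t → g t = φ t ^ m / t ^ m := fun t ht => by
    simp only [hg, max_eq_left ht]
  have hgbound : ∀ t, g t ≤ g R₀ := by
    intro t
    have h1 : g t = g (max t R₀) := by
      simp only [hg, max_eq_left (le_max_right t R₀)]
    rw [h1]
    exact hganti (le_max_right t R₀)
  set G : ℝ → ℝ≥0∞ := fun t => ENNReal.ofReal (g t) with hGdef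
  have hGmeas : Measurable G := (hganti.measurable).ennreal_ofReal
  have hGanti : Antitone G := fun s t hst => ENNReal.ofReal_le_ofReal (hganti hst)
  have hGbound : ∀ t, G t ≤ ENNReal.ofReal (g R₀) := fun t => ENNReal.ofReal_le_ofReal (hgbound t)
  set S : ℝ≥0∞ := ∑' n, G ‖c n‖ with hS
  set I : ℝ≥0∞ := ∫⁻ t in Ici R₀, ENNReal.ofReal (t ^ (d - 1)) * G t with hI
  haveI : Nontrivial (EuclideanSpace ℝ (Fin d)) := by
    refine Module.nontrivial_of_finrank_pos (R := ℝ) ?_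
    rw [finrank_euclideanSpace_fin]; omega
  set c₀ : ℝ≥0∞ := (d : ℝ≥0∞) * volume (ball (0 : EuclideanSpace ℝ (Fin d)) 1) with hc₀
  have hc₀top : c₀ ≠ ⊤ := ENNReal.mul_ne_top (ENNReal.natCast_ne_top d) measure_ball_lt_top.ne
  have hc₀0 : c₀ ≠ 0 := by
    apply mul_ne_zero
    · simp only [ne_eq, Nat.cast_eq_zero]; omega
    · exact (measure_ball_pos _ _ one_pos).ne'
  have radial : ∀ f : ℝ → ℝ≥0∞, Measurable f →
      ∫⁻ x : EuclideanSpace ℝ (Fin d), f ‖x‖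
        = c₀ * ∫⁻ y in Ioi (0:ℝ), ENNReal.ofReal (y ^ (d - 1)) * f y := by
    intro f hf
    have h := lintegral_fun_norm_addHaar' (volume : Measure (EuclideanSpace ℝ (Fin d))) f hf
    rwa [finrank_euclideanSpace_fin] at h
  -- direction: integral finite ⇒ sum finite (packing)
  have dir1 : I ≠ ⊤ → S ≠ ⊤ := by
    intro hIfin
    set vε := volume (ball (0 : EuclideanSpace ℝ (Fin d)) ε) with hvε
    have hvε0 : vε ≠ 0 := (measure_ball_pos _ _ hε).ne'
    have hGε : Measurable fun x : EuclideanSpace ℝ (Fin d) => G (‖x‖ - ε) :=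
      hGmeas.comp (measurable_norm.sub measurable_const)
    have step1 : S * vε ≤ ∫⁻ x : EuclideanSpace ℝ (Fin d), G (‖x‖ - ε) := by
      calc S * vε = ∑' n, G ‖c n‖ * vε := ENNReal.tsum_mul_right.symm
        _ = ∑' n, ∫⁻ _x in ball (c n) ε, G ‖c n‖ := by
            congr 1; funext n
            rw [setLIntegral_const, Measure.addHaar_ball_center]
        _ ≤ ∑' n, ∫⁻ x in ball (c n) ε, G (‖x‖ - ε) := by
            refine ENNReal.tsum_le_tsum fun n => setLIntegral_mono hGε fun x hx => ?_
            refine hGanti ?_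
            have h1 : ‖x‖ - ‖c n‖ ≤ ‖x - c n‖ := norm_sub_norm_le _ _
            have hx' : ‖x - c n‖ < ε := by rwa [mem_ball, dist_eq_norm] at hx
            linarith
        _ = ∫⁻ x in ⋃ n, ball (c n) ε, G (‖x‖ - ε) := by
            refine (lintegral_iUnion (fun n => measurableSet_ball) ?_ _).symm
            intro n k hnk
            apply ball_disjoint_ball
            rw [dist_eq_norm]
            have := hsep n k hnk
            linarith
        _ ≤ _ := setLIntegral_le_lintegral _ _
    have step2 : ∫⁻ x : EuclideanSpace ℝ (Fin d), G (‖x‖ - ε)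
        = c₀ * ∫⁻ y in Ioi (0:ℝ), ENNReal.ofReal (y ^ (d - 1)) * G (y - ε) :=
      radial _ (hGmeas.comp (measurable_id.sub measurable_const))
    have piece1 : ∫⁻ y in Ioc (0:ℝ) (R₀ + ε), ENNReal.ofReal (y ^ (d - 1)) * G (y - ε) ≠ ⊤ := by
      have hb : ∀ y ∈ Ioc (0:ℝ) (R₀ + ε), ENNReal.ofReal (y ^ (d - 1)) * G (y - ε)
          ≤ ENNReal.ofReal ((R₀ + ε) ^ (d - 1)) * ENNReal.ofReal (g R₀) := fun y hy =>
        mul_le_mul' (ENNReal.ofReal_le_ofReal (pow_le_pow_left₀ hy.1.le hy.2 _)) (hGbound _)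
      refine ne_top_of_le_ne_top ?_
        ((setLIntegral_mono measurable_const hb).trans_eq (setLIntegral_const _ _))
      exact ENNReal.mul_ne_top (ENNReal.mul_ne_top ENNReal.ofReal_ne_top ENNReal.ofReal_ne_top)
        (by rw [Real.volume_Ioc]; exact ENNReal.ofReal_ne_top)
    have piece2 : ∫⁻ y in Ioi (R₀ + ε), ENNReal.ofReal (y ^ (d - 1)) * G (y - ε) ≠ ⊤ := by
      have hshift : ∫⁻ y in Ioi (R₀ + ε), ENNReal.ofReal (y ^ (d - 1)) * G (y - ε)
          = ∫⁻ s in Ioi R₀, ENNReal.ofReal ((s + ε) ^ (d - 1)) * G s := by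
        rw [lintegral_shift_Ioi (fun y => ENNReal.ofReal (y ^ (d - 1)) * G (y - ε)) ε R₀]
        exact setLIntegral_congr_fun measurableSet_Ioi
          (fun s _ => by rw [add_sub_cancel_right])
      rw [hshift]
      set C1 := ENNReal.ofReal ((1 + ε / R₀) ^ (d - 1)) with hC1
      have hsm : Measurable fun s : ℝ => ENNReal.ofReal (s ^ (d - 1)) * G s :=
        ((measurable_id.pow_const _).ennreal_ofReal).mul hGmeas
      have hb : ∀ s ∈ Ioi R₀, ENNReal.ofReal ((s + ε) ^ (d - 1)) * G s
          ≤ C1 * (ENNReal.ofReal (s ^ (d - 1)) * G s) := by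
        intro s hs
        have hs' : R₀ < s := hs
        have hs0 : (0:ℝ) < s := hR₀.trans hs'
        have h1 : s + ε ≤ (1 + ε / R₀) * s := by
          have h2 : ε ≤ ε / R₀ * s := by
            rw [div_mul_eq_mul_div, le_div_iff₀ hR₀]
            nlinarith
          nlinarith
        have h2 : (s + ε) ^ (d - 1) ≤ (1 + ε / R₀) ^ (d - 1) * s ^ (d - 1) := by
          calc (s + ε) ^ (d - 1) ≤ ((1 + ε / R₀) * s) ^ (d - 1) :=
                pow_le_pow_left₀ (by positivity) h1 _
            _ = _ := mul_pow _ _ _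
        have h3 : ENNReal.ofReal ((s + ε) ^ (d - 1)) ≤ C1 * ENNReal.ofReal (s ^ (d - 1)) := by
          rw [hC1, ← ENNReal.ofReal_mul (by positivity)]
          exact ENNReal.ofReal_le_ofReal h2
        calc ENNReal.ofReal ((s + ε) ^ (d - 1)) * G s
            ≤ (C1 * ENNReal.ofReal (s ^ (d - 1))) * G s := mul_le_mul' h3 le_rfl
          _ = C1 * (ENNReal.ofReal (s ^ (d - 1)) * G s) := mul_assoc _ _ _
      have hmono : ∫⁻ s in Ioi R₀, ENNReal.ofReal ((s + ε) ^ (d - 1)) * G s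
          ≤ C1 * ∫⁻ s in Ioi R₀, ENNReal.ofReal (s ^ (d - 1)) * G s := by
        rw [← lintegral_const_mul C1 hsm]
        exact setLIntegral_mono (measurable_const.mul hsm) hb
      refine ne_top_of_le_ne_top (ENNReal.mul_ne_top ENNReal.ofReal_ne_top hIfin)
        (hmono.trans (mul_le_mul' le_rfl (lintegral_mono_set Ioi_subset_Ici_self)))
    have Kfin : ∫⁻ y in Ioi (0:ℝ), ENNReal.ofReal (y ^ (d - 1)) * G (y - ε) ≠ ⊤ := by
      refine ne_top_of_le_ne_top (ENNReal.add_ne_top.mpr ⟨piece1, piece2⟩) ?_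
      refine le_of_eq_of_le ?_ (lintegral_union_le _ _ _)
      rw [Ioc_union_Ioi_eq_Ioi (by positivity : (0:ℝ) ≤ R₀ + ε)]
    have hfin : S * vε ≠ ⊤ :=
      ne_top_of_le_ne_top (ENNReal.mul_ne_top hc₀top Kfin) (step1.trans_eq step2)
    intro hStop
    exact hfin (by rw [hStop, ENNReal.top_mul hvε0])
  -- direction: sum finite ⇒ integral finite (covering)
  have dir2 : S ≠ ⊤ → I ≠ ⊤ := by
    intro hSfin
    set vR := volume (ball (0 : EuclideanSpace ℝ (Fin d)) R) with hvR
    set L : ℝ≥0∞ := ∫⁻ y in Ici R₀, ENNReal.ofReal (y ^ (d - 1)) * G (y + R) with hL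
    have hA : MeasurableSet {x : EuclideanSpace ℝ (Fin d) | R₀ ≤ ‖x‖} :=
      measurable_norm measurableSet_Ici
    have upper : ∫⁻ x in {x : EuclideanSpace ℝ (Fin d) | R₀ ≤ ‖x‖}, G (‖x‖ + R) ≤ S * vR := by
      calc ∫⁻ x in {x : EuclideanSpace ℝ (Fin d) | R₀ ≤ ‖x‖}, G (‖x‖ + R)
          ≤ ∫⁻ x in ⋃ n, ball (c n) R, G (‖x‖ + R) := by
            refine lintegral_mono_set fun x hx => mem_iUnion.mpr ?_
            obtain ⟨n, hn⟩ := hdense x hx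
            exact ⟨n, by rwa [mem_ball, dist_eq_norm]⟩
        _ ≤ ∑' n, ∫⁻ x in ball (c n) R, G (‖x‖ + R) := lintegral_iUnion_le _ _
        _ ≤ ∑' n, G ‖c n‖ * vR := by
            refine ENNReal.tsum_le_tsum fun n => ?_
            have hb : ∀ x ∈ ball (c n) R, G (‖x‖ + R) ≤ G ‖c n‖ := by
              intro x hx
              apply hGanti
              have hx' : ‖x - c n‖ < R := by rwa [mem_ball, dist_eq_norm] at hx
              have h1 : ‖c n‖ - ‖x‖ ≤ ‖x - c n‖ := by
                have h2 := norm_sub_norm_le (c n) x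
                rwa [norm_sub_rev] at h2
              linarith
            calc ∫⁻ x in ball (c n) R, G (‖x‖ + R) ≤ ∫⁻ _x in ball (c n) R, G ‖c n‖ :=
                  setLIntegral_mono measurable_const hb
              _ = G ‖c n‖ * vR := by rw [setLIntegral_const, Measure.addHaar_ball_center]
        _ = S * vR := ENNReal.tsum_mul_right
    have heqL : ∫⁻ x in {x : EuclideanSpace ℝ (Fin d) | R₀ ≤ ‖x‖}, G (‖x‖ + R) = c₀ * L := by
      have hH : Measurable ((Ici R₀).indicator fun t : ℝ => G (t + R)) :=
        (hGmeas.comp (measurable_id.add measurable_const)).indicator measurableSet_Ici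
      have e1 : ∫⁻ x in {x : EuclideanSpace ℝ (Fin d) | R₀ ≤ ‖x‖}, G (‖x‖ + R)
          = ∫⁻ x : EuclideanSpace ℝ (Fin d), ((Ici R₀).indicator fun t => G (t + R)) ‖x‖ := by
        rw [← lintegral_indicator hA]
        refine lintegral_congr fun x => ?_
        by_cases hx : R₀ ≤ ‖x‖ <;>
          simp [Set.indicator_apply, hx]
      have e2 : ∫⁻ x : EuclideanSpace ℝ (Fin d), ((Ici R₀).indicator fun t => G (t + R)) ‖x‖
          = c₀ * ∫⁻ y in Ioi (0:ℝ),
              ENNReal.ofReal (y ^ (d - 1)) * ((Ici R₀).indicator fun t => G (t + R)) y :=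
        radial _ hH
      have e3 : ∫⁻ y in Ioi (0:ℝ),
          ENNReal.ofReal (y ^ (d - 1)) * ((Ici R₀).indicator fun t => G (t + R)) y = L := by
        have hpt : ∀ y : ℝ, ENNReal.ofReal (y ^ (d - 1)) * ((Ici R₀).indicator fun t => G (t + R)) y
            = (Ici R₀).indicator (fun t => ENNReal.ofReal (t ^ (d - 1)) * G (t + R)) y := by
          intro y; by_cases hy : y ∈ Ici R₀ <;> simp [Set.indicator_apply, hy]
        have hinter : Ici R₀ ∩ Ioi (0:ℝ) = Ici R₀ :=
          Set.inter_eq_left.mpr fun y hy => lt_of_lt_of_le hR₀ hy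
        rw [lintegral_congr hpt, lintegral_indicator measurableSet_Ici,
          Measure.restrict_restrict measurableSet_Ici, hinter]
      rw [e1, e2, e3]
    have hLfin : L ≠ ⊤ := by
      intro htop
      have h1 : c₀ * L = ⊤ := by rw [htop, ENNReal.mul_top hc₀0]
      rw [← heqL] at h1
      exact (ne_top_of_le_ne_top (ENNReal.mul_ne_top hSfin measure_ball_lt_top.ne) upper) h1
    set S₀ := R₀ + 2 * R with hS₀def
    have pieceA : ∫⁻ t in Ico R₀ S₀, ENNReal.ofReal (t ^ (d - 1)) * G t ≠ ⊤ := by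
      have hb : ∀ t ∈ Ico R₀ S₀, ENNReal.ofReal (t ^ (d - 1)) * G t
          ≤ ENNReal.ofReal (S₀ ^ (d - 1)) * ENNReal.ofReal (g R₀) := fun t ht =>
        mul_le_mul' (ENNReal.ofReal_le_ofReal
          (pow_le_pow_left₀ (hR₀.le.trans ht.1) ht.2.le _)) (hGbound _)
      refine ne_top_of_le_ne_top ?_
        ((setLIntegral_mono measurable_const hb).trans_eq (setLIntegral_const _ _))
      exact ENNReal.mul_ne_top (ENNReal.mul_ne_top ENNReal.ofReal_ne_top ENNReal.ofReal_ne_top)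
        (by rw [Real.volume_Ico]; exact ENNReal.ofReal_ne_top)
    have pieceB : ∫⁻ t in Ici S₀, ENNReal.ofReal (t ^ (d - 1)) * G t ≠ ⊤ := by
      have hsm : Measurable fun t : ℝ => ENNReal.ofReal ((t - R) ^ (d - 1)) * G t :=
        (((measurable_id.sub measurable_const).pow_const _).ennreal_ofReal).mul hGmeas
      have hb : ∀ t ∈ Ici S₀, ENNReal.ofReal (t ^ (d - 1)) * G t
          ≤ ENNReal.ofReal ((2:ℝ) ^ (d - 1)) * (ENNReal.ofReal ((t - R) ^ (d - 1)) * G t) := by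
        intro t ht
        have ht' : S₀ ≤ t := ht
        have h1 : t ^ (d - 1) ≤ (2:ℝ) ^ (d - 1) * (t - R) ^ (d - 1) := by
          calc t ^ (d - 1) ≤ (2 * (t - R)) ^ (d - 1) :=
                pow_le_pow_left₀ (by simp only [hS₀def] at ht'; linarith) (by simp only [hS₀def] at ht'; linarith) _
            _ = _ := mul_pow _ _ _
        have h3 : ENNReal.ofReal (t ^ (d - 1)) ≤ ENNReal.ofReal ((2:ℝ) ^ (d - 1)) * ENNReal.ofReal ((t - R) ^ (d - 1)) := by
          rw [← ENNReal.ofReal_mul (by positivity)]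
          exact ENNReal.ofReal_le_ofReal h1
        calc ENNReal.ofReal (t ^ (d - 1)) * G t
            ≤ (ENNReal.ofReal ((2:ℝ) ^ (d - 1)) * ENNReal.ofReal ((t - R) ^ (d - 1))) * G t :=
              mul_le_mul' h3 le_rfl
          _ = _ := mul_assoc _ _ _
      have hmono : ∫⁻ t in Ici S₀, ENNReal.ofReal (t ^ (d - 1)) * G t
          ≤ ENNReal.ofReal ((2:ℝ) ^ (d - 1)) * ∫⁻ t in Ici S₀, ENNReal.ofReal ((t - R) ^ (d - 1)) * G t := by
        rw [← lintegral_const_mul _ hsm]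
        exact setLIntegral_mono (measurable_const.mul hsm) hb
      have hshift : ∫⁻ t in Ici S₀, ENNReal.ofReal ((t - R) ^ (d - 1)) * G t
          = ∫⁻ r in Ici (R₀ + R), ENNReal.ofReal (r ^ (d - 1)) * G (r + R) := by
        have hS0 : S₀ = (R₀ + R) + R := by rw [hS₀def]; ring
        rw [hS0, lintegral_shift_Ici (fun t => ENNReal.ofReal ((t - R) ^ (d - 1)) * G t) R (R₀ + R)]
        exact setLIntegral_congr_fun measurableSet_Ici
          (fun r _ => by rw [add_sub_cancel_right])
      have hle : ∫⁻ t in Ici S₀, ENNReal.ofReal (t ^ (d - 1)) * G t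
          ≤ ENNReal.ofReal ((2:ℝ) ^ (d - 1)) * L := by
        refine hmono.trans (mul_le_mul' le_rfl ?_)
        rw [hshift, hL]
        exact lintegral_mono_set (Ici_subset_Ici.mpr (by linarith))
      exact ne_top_of_le_ne_top (ENNReal.mul_ne_top ENNReal.ofReal_ne_top hLfin) hle
    refine ne_top_of_le_ne_top (ENNReal.add_ne_top.mpr ⟨pieceA, pieceB⟩) ?_
    rw [hI]
    refine le_of_eq_of_le ?_ (lintegral_union_le _ _ _)
    rw [Ico_union_Ici_eq_Ici (by linarith : R₀ ≤ S₀)]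
  -- translate both sides
  have left : Summable (fun n => φ ‖c n‖ ^ m / ‖c n‖ ^ m) ↔ S ≠ ⊤ := by
    have hterm : (fun n => φ ‖c n‖ ^ m / ‖c n‖ ^ m) = fun n => g ‖c n‖ :=
      funext fun n => (hgval _ (hout n)).symm
    rw [hterm]
    constructor
    · intro h
      rw [hS]
      simp only [hGdef]
      rw [← ENNReal.ofReal_tsum_of_nonneg (fun n => (hgpos _).le) h]
      exact ENNReal.ofReal_ne_top
    · intro h
      have h2 := ENNReal.summable_toReal h
      refine h2.congr fun n => ?_
      simp only [hGdef]
      exact ENNReal.toReal_ofReal (hgpos _).le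
  have hg₀meas : Measurable fun t : ℝ => t ^ (d - 1) * g t :=
    (measurable_id.pow_const _).mul hganti.measurable
  have heqset : Set.EqOn (fun t : ℝ => t * φ t ^ m) (fun t : ℝ => t ^ (d - 1) * g t) (Ici R₀) := by
    intro t ht
    have ht0 : (0:ℝ) < t := hR₀.trans_le ht
    have htm : t ^ m ≠ 0 := pow_ne_zero _ ht0.ne'
    simp only
    rw [hgval t ht, hd1, pow_succ]
    field_simp
  have right : IntegrableOn (fun t => t * φ t ^ m) (Ici R₀) ↔ I ≠ ⊤ := by
    rw [integrableOn_congr_fun heqset measurableSet_Ici]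
    have hInorm : I = ∫⁻ t in Ici R₀, ENNReal.ofReal ‖t ^ (d - 1) * g t‖ := by
      rw [hI]
      refine setLIntegral_congr_fun measurableSet_Ici (fun t ht => ?_)
      have ht0 : (0:ℝ) < t := hR₀.trans_le ht
      have hnn : 0 ≤ t ^ (d - 1) * g t := mul_nonneg (pow_nonneg ht0.le _) (hgpos t).le
      rw [Real.norm_of_nonneg hnn, ENNReal.ofReal_mul (pow_nonneg ht0.le _)]
    constructor
    · intro h
      rw [hInorm]
      exact ((hasFiniteIntegral_iff_norm _).mp h.2).ne
    · intro h
      refine ⟨hg₀meas.aestronglyMeasurable.restrict, (hasFiniteIntegral_iff_norm _).mpr ?_⟩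
      rw [← hInorm]
      exact lt_top_iff_ne_top.mpr h
  rw [left, right]
  exact ⟨dir2, dir1⟩
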